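/- arXiv:2104.08770 — 2 statements merged into one kernel-verified Lean document; each statement's English description precedes it below -/
import Mathlib

section
/- Let p > 5 be a prime with −1 a quadratic residue and 2, 3 non-residues mod p, with p ≥ 1711. Then the path system 𝒫_p on the Paley graph G_p is non-metrizable: there is no weight function w : E(G_p) → (0,∞) such that for every pair u,v the path P_{u,v} has w-weight at most that of every other uv-path in G_p. -/
open scoped Classical

/-- `a` is a (nonzero) quadratic residue in `ZMod p`. -/
def IsQR (p : ℕ) (a : ZMod p) : Prop := a ≠ 0 ∧ IsSquare a

/-- The Paley graph on `𝔽_p`: `a ~ b` iff `a - b` is a nonzero quadratic residue.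
(The adjacency is stated symmetrically; when `-1` is a residue this agrees with
the usual definition.) -/
def paley (p : ℕ) : SimpleGraph (ZMod p) where
  Adj a b := a ≠ b ∧ IsSquare (a - b) ∧ IsSquare (b - a)
  symm := by constructor; intro a b h; exact ⟨h.1.symm, h.2.2, h.2.1⟩
  loopless := by constructor; intro a h; exact h.1 rfl

/-- The list of vertices of the path `P_{a,b}` of the path system `𝒫_p`. -/
noncomputable def specList (p : ℕ) (a b : ZMod p) : List (ZMod p) :=
  if IsQR p (b - a) then [a, b]
  else if b - a = 3 then [a, a + 1, a + 2, b]
  else [a, (a + b) * (2 : ZMod p)⁻¹, b]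

/-- Weight of a walk: sum of the weights of its edges. -/
noncomputable def walkWeight {V : Type*} (w : V → V → ℝ) {G : SimpleGraph V} {u v : V}
    (W : G.Walk u v) : ℝ :=
  (W.darts.map fun d => w d.toProd.1 d.toProd.2).sum

/-- Weight of a path given by its list of vertices: sum over consecutive pairs. -/
noncomputable def listWeight {V : Type*} (w : V → V → ℝ) (l : List V) : ℝ :=
  ((l.zip l.tail).map fun q => w q.1 q.2).sum

open Finset

variable {p : ℕ} [Fact p.Prime]

noncomputable def phiW (q : ℕ) [Fact q.Prime] (w : ZMod q → ZMod q → ℝ) (d : ZMod q) : ℝ :=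
  ∑ t : ZMod q, w t (t + d)

private lemma sum_shift (w : ZMod p → ZMod p → ℝ) (a b : ZMod p) :
    ∑ t : ZMod p, w (t + a) (t + b) = phiW p w (b - a) := by
  rw [phiW]
  refine Fintype.sum_equiv (Equiv.addRight a) _ _ (fun t => ?_)
  show w (t + a) (t + b) = w (t + a) ((t + a) + (b - a))
  congr 1
  ring

private lemma phiW_neg (w : ZMod p → ZMod p → ℝ) (hsymm : ∀ a b, w a b = w b a)
    (d : ZMod p) : phiW p w (-d) = phiW p w d := by
  have h1 : phiW p w (-d) = ∑ t : ZMod p, w (t + -d) (t + 0) := by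
    rw [phiW]
    refine Finset.sum_congr rfl (fun t _ => ?_)
    rw [hsymm]
    congr 1 <;> ring
  rw [h1, sum_shift]
  congr 1
  ring

private lemma paley_adj (h1sq : IsSquare (-1 : ZMod p)) (u v : ZMod p)
    (hne : u ≠ v) (hsq : IsSquare (v - u)) : (paley p).Adj u v := by
  refine ⟨hne, ?_, hsq⟩
  have : u - v = -1 * (v - u) := by ring
  rw [this]
  exact h1sq.mul hsq

private lemma phiW_pos (w : ZMod p → ZMod p → ℝ)
    (hpos : ∀ a b, (paley p).Adj a b → 0 < w a b)
    (h1sq : IsSquare (-1 : ZMod p)) (d : ZMod p) (hd : d ≠ 0) (hsq : IsSquare d) :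
    0 < phiW p w d := by
  rw [phiW]
  refine Finset.sum_pos (fun t _ => hpos _ _ (paley_adj h1sq _ _ ?_ ?_)) univ_nonempty
  · intro h
    exact hd (by linear_combination -h)
  · have : t + d - t = d := by ring
    rw [this]; exact hsq

private lemma listWeight_three (w : ZMod p → ZMod p → ℝ) (x y z : ZMod p) :
    listWeight w [x, y, z] = w x y + w y z := by
  simp [listWeight]

private lemma listWeight_four (w : ZMod p → ZMod p → ℝ) (x y z u : ZMod p) :
    listWeight w [x, y, z, u] = w x y + w y z + w z u := by
  simp [listWeight]; ring



private lemma jacobi_aux (hp2 : p ≠ 2) (c : ZMod p) (hc : c ≠ 0) :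
    ∑ u : ZMod p, quadraticChar (ZMod p) u * quadraticChar (ZMod p) (u + c) = -1 := by
  set χ := quadraticChar (ZMod p) with hχ
  have hchar : ringChar (ZMod p) ≠ 2 := by
    rw [ZMod.ringChar_zmod_n]; exact hp2
  have h0 : χ 0 * χ (0 + c) = 0 := by
    rw [quadraticChar_zero]; ring
  have hsplit := Finset.sum_erase_add Finset.univ
    (fun u => χ u * χ (u + c)) (Finset.mem_univ (0 : ZMod p))
  have step2 : ∀ u ∈ Finset.univ.erase (0 : ZMod p),
      χ u * χ (u + c) = χ (1 + c * u⁻¹) := by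
    intro u hu
    have hu0 : u ≠ 0 := (Finset.mem_erase.1 hu).1
    have huc : u + c = u * (1 + c * u⁻¹) := by field_simp
    rw [huc, map_mul, ← mul_assoc, ← pow_two, quadraticChar_sq_one hu0, one_mul]
  rw [← hsplit, Finset.sum_congr rfl step2]
  simp only [quadraticChar_zero, zero_mul, add_zero, hχ]
  have hbij : ∑ u ∈ Finset.univ.erase (0 : ZMod p), χ (1 + c * u⁻¹)
      = ∑ v ∈ Finset.univ.erase (1 : ZMod p), χ v := by
    apply Finset.sum_bij' (fun u _ => 1 + c * u⁻¹) (fun v _ => c * (v - 1)⁻¹)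
    · intro u hu
      have hu0 : u ≠ 0 := (Finset.mem_erase.1 hu).1
      refine Finset.mem_erase.2 ⟨?_, Finset.mem_univ _⟩
      intro h
      have : c * u⁻¹ = 0 := by linear_combination h
      rcases mul_eq_zero.1 this with h' | h'
      · exact hc h'
      · exact hu0 (inv_eq_zero.mp h')
    · intro v hv
      have hv1 : v ≠ 1 := (Finset.mem_erase.1 hv).1
      refine Finset.mem_erase.2 ⟨?_, Finset.mem_univ _⟩
      intro h
      rcases mul_eq_zero.1 h with h' | h'
      · exact hc h'
      · exact sub_ne_zero.2 hv1 (by simpa using inv_eq_zero.mp h')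
    · intro u hu
      have hu0 : u ≠ 0 := (Finset.mem_erase.1 hu).1
      field_simp
      simp [hc]
    · intro v hv
      have hv1 : v ≠ 1 := (Finset.mem_erase.1 hv).1
      have : v - 1 ≠ 0 := sub_ne_zero.2 hv1
      field_simp
      ring
    · intro u hu; rfl
  rw [hbij]
  have := Finset.sum_erase_add Finset.univ χ (Finset.mem_univ (1 : ZMod p))
  have hz : ∑ v : ZMod p, χ v = 0 := quadraticChar_sum_zero hchar
  have h1 : χ 1 = 1 := map_one χ
  omega

private lemma chi_cases (a : ZMod p) :
    quadraticChar (ZMod p) a = 0 ∨ quadraticChar (ZMod p) a = 1 ∨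
      quadraticChar (ZMod p) a = -1 := by
  by_cases h : a = 0
  · exact Or.inl (by rw [h, quadraticChar_zero])
  · exact Or.inr (quadraticChar_dichotomy h)

private lemma chi_zero_iff (a : ZMod p) :
    quadraticChar (ZMod p) a = 0 ↔ a = 0 := by
  constructor
  · intro h; by_contra h0
    rcases quadraticChar_dichotomy h0 with h' | h' <;> omega
  · intro h; rw [h, quadraticChar_zero]

private lemma count_T (hp2 : p ≠ 2)
    (hm1 : quadraticChar (ZMod p) (-1) = 1)
    (c : ZMod p) (hc : quadraticChar (ZMod p) c = -1) :
    4 * (((Finset.univ.filter (fun a : ZMod p =>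
      quadraticChar (ZMod p) a = 1 ∧ quadraticChar (ZMod p) (c - a) = 1)).card : ℤ))
      = (p : ℤ) - 1 := by
  set χ := quadraticChar (ZMod p) with hχ
  have hc0 : c ≠ 0 := by
    intro h; rw [h, quadraticChar_zero] at hc; omega
  have hchar : ringChar (ZMod p) ≠ 2 := by rw [ZMod.ringChar_zmod_n]; exact hp2
  haveI : NeZero p := ⟨(Fact.out : p.Prime).ne_zero⟩
  have hexp : ∀ a : ZMod p, (1 + χ a) * (1 + χ (c - a))
      = 1 + χ a + χ (c - a) + χ a * χ (c - a) := by intro a; ring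
  have hS : ∑ a : ZMod p, (1 + χ a) * (1 + χ (c - a)) = (p : ℤ) - 1 := by
    rw [Finset.sum_congr rfl fun a _ => hexp a]
    rw [Finset.sum_add_distrib, Finset.sum_add_distrib, Finset.sum_add_distrib]
    have e1 : ∑ _a : ZMod p, (1 : ℤ) = (p : ℤ) := by
      simp [Finset.card_univ, ZMod.card]
    have e2 : ∑ a : ZMod p, χ a = 0 := quadraticChar_sum_zero hchar
    have e3 : ∑ a : ZMod p, χ (c - a) = 0 := by
      rw [Fintype.sum_equiv (Equiv.subLeft c) (fun a => χ (c - a)) χ (fun a => rfl)]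
      exact quadraticChar_sum_zero hchar
    have e4 : ∑ a : ZMod p, χ a * χ (c - a) = -1 := by
      have : ∀ a : ZMod p, χ (c - a) = χ (a + -c) := by
        intro a
        have h' : c - a = -1 * (a + -c) := by ring
        rw [h', map_mul, hm1, one_mul]
      rw [Finset.sum_congr rfl fun a _ => by rw [this a]]
      exact jacobi_aux hp2 (-c) (neg_ne_zero.2 hc0)
    rw [e1, e2, e3, e4]; ring
  rw [← hS]
  rw [← Finset.sum_filter_add_sum_filter_not Finset.univ
    (fun a : ZMod p => χ a = 1 ∧ χ (c - a) = 1)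
    (fun a => (1 + χ a) * (1 + χ (c - a)))]
  have hA : ∑ a ∈ Finset.univ.filter (fun a : ZMod p => χ a = 1 ∧ χ (c - a) = 1),
      (1 + χ a) * (1 + χ (c - a))
      = 4 * ((Finset.univ.filter (fun a : ZMod p =>
          χ a = 1 ∧ χ (c - a) = 1)).card : ℤ) := by
    calc ∑ a ∈ Finset.univ.filter (fun a : ZMod p => χ a = 1 ∧ χ (c - a) = 1),
          (1 + χ a) * (1 + χ (c - a))
        = ∑ _a ∈ Finset.univ.filter (fun a : ZMod p => χ a = 1 ∧ χ (c - a) = 1),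
          (4 : ℤ) := by
          refine Finset.sum_congr rfl (fun a ha => ?_)
          rcases Finset.mem_filter.1 ha with ⟨-, h1, h2⟩
          rw [h1, h2]; norm_num
      _ = 4 * ((Finset.univ.filter (fun a : ZMod p =>
          χ a = 1 ∧ χ (c - a) = 1)).card : ℤ) := by
          rw [Finset.sum_const, nsmul_eq_mul, mul_comm]
  have hB : ∑ a ∈ Finset.univ.filter (fun a : ZMod p => ¬(χ a = 1 ∧ χ (c - a) = 1)),
      (1 + χ a) * (1 + χ (c - a)) = 0 := by
    apply Finset.sum_eq_zero
    intro a ha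
    rcases Finset.mem_filter.1 ha with ⟨-, hna⟩
    rcases chi_cases a with h | h | h
    · -- a = 0
      have ha0 : a = 0 := (chi_zero_iff a).1 h
      subst ha0
      have h0 : χ (0 : ZMod p) = 0 := quadraticChar_zero
      rw [sub_zero, hc, h0]; ring
    · rcases chi_cases (c - a) with h' | h' | h'
      · have : c - a = 0 := (chi_zero_iff _).1 h'
        have hac : a = c := by linear_combination -this
        rw [hac, hc] at h; omega
      · exact absurd ⟨h, h'⟩ hna
      · rw [h'] ; ring
    · rw [h]; ring
  rw [hA, hB, add_zero]

private lemma count_X (hp2 : p ≠ 2)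
    (hm1 : quadraticChar (ZMod p) (-1) = 1)
    (h2 : quadraticChar (ZMod p) 2 = -1) :
    4 * (((Finset.univ.filter (fun x : ZMod p =>
      quadraticChar (ZMod p) (2 * x - 1) = -1 ∧
      quadraticChar (ZMod p) (2 * x + 1) = -1)).card : ℤ)) ≤ (p : ℤ) - 3 := by
  set χ := quadraticChar (ZMod p) with hχ
  have hchar : ringChar (ZMod p) ≠ 2 := by rw [ZMod.ringChar_zmod_n]; exact hp2
  haveI : NeZero p := ⟨(Fact.out : p.Prime).ne_zero⟩
  have h20 : (2 : ZMod p) ≠ 0 := by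
    intro h; rw [h, quadraticChar_zero] at h2; omega
  have hS : ∑ x : ZMod p, (1 - χ (2 * x - 1)) * (1 - χ (2 * x + 1)) = (p : ℤ) - 1 := by
    have hexp : ∀ x : ZMod p, (1 - χ (2 * x - 1)) * (1 - χ (2 * x + 1))
        = 1 - χ (2 * x - 1) - χ (2 * x + 1) + χ (2 * x - 1) * χ (2 * x + 1) := by
      intro x; ring
    rw [Finset.sum_congr rfl fun x _ => hexp x]
    rw [Finset.sum_add_distrib, Finset.sum_sub_distrib, Finset.sum_sub_distrib]
    have e1 : ∑ _x : ZMod p, (1 : ℤ) = (p : ℤ) := by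
      simp [Finset.card_univ, ZMod.card]
    have e2 : ∑ x : ZMod p, χ (2 * x - 1) = 0 := by
      rw [Fintype.sum_equiv ((Equiv.mulLeft₀ (2 : ZMod p) h20).trans (Equiv.subRight 1))
        (fun x => χ (2 * x - 1)) χ (fun x => rfl)]
      exact quadraticChar_sum_zero hchar
    have e3 : ∑ x : ZMod p, χ (2 * x + 1) = 0 := by
      rw [Fintype.sum_equiv ((Equiv.mulLeft₀ (2 : ZMod p) h20).trans (Equiv.addRight 1))
        (fun x => χ (2 * x + 1)) χ (fun x => rfl)]
      exact quadraticChar_sum_zero hchar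
    have e4 : ∑ x : ZMod p, χ (2 * x - 1) * χ (2 * x + 1) = -1 := by
      rw [Fintype.sum_equiv ((Equiv.mulLeft₀ (2 : ZMod p) h20).trans (Equiv.subRight 1))
        (fun x => χ (2 * x - 1) * χ (2 * x + 1))
        (fun u => χ u * χ (u + 2)) (fun x => by
          show χ (2 * x - 1) * χ (2 * x + 1) = χ (2 * x - 1) * χ ((2 * x - 1) + 2)
          have hx : (2 * x - 1 : ZMod p) + 2 = 2 * x + 1 := by ring
          rw [hx])]
      exact jacobi_aux hp2 2 h20
    rw [e1, e2, e3, e4]; ring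
  -- split
  set P : ZMod p → Prop := fun x => χ (2 * x - 1) = -1 ∧ χ (2 * x + 1) = -1 with hP
  have hnonneg : ∀ v : ZMod p, (0:ℤ) ≤ 1 - χ v := by
    intro v; rcases chi_cases v with h | h | h <;> rw [h] <;> norm_num
  have hsplit := Finset.sum_filter_add_sum_filter_not Finset.univ P
    (fun x => (1 - χ (2 * x - 1)) * (1 - χ (2 * x + 1)))
  have hA : ∑ x ∈ Finset.univ.filter P, (1 - χ (2 * x - 1)) * (1 - χ (2 * x + 1))
      = 4 * ((Finset.univ.filter P).card : ℤ) := by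
    calc ∑ x ∈ Finset.univ.filter P, (1 - χ (2 * x - 1)) * (1 - χ (2 * x + 1))
        = ∑ _x ∈ Finset.univ.filter P, (4 : ℤ) := by
          refine Finset.sum_congr rfl (fun x hx => ?_)
          rcases Finset.mem_filter.1 hx with ⟨-, h1', h2'⟩
          rw [h1', h2']; norm_num
      _ = 4 * ((Finset.univ.filter P).card : ℤ) := by
          rw [Finset.sum_const, nsmul_eq_mul, mul_comm]
  have hmem : (2⁻¹ : ZMod p) ∈ Finset.univ.filter (fun x => ¬ P x) := by
    refine Finset.mem_filter.2 ⟨Finset.mem_univ _, ?_⟩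
    intro hPx
    have : (2 : ZMod p) * 2⁻¹ - 1 = 0 := by
      rw [mul_inv_cancel₀ h20]; ring
    rw [hP] at hPx
    rcases hPx with ⟨hx1, -⟩
    rw [this, quadraticChar_zero] at hx1
    omega
  have hBge : (2:ℤ) ≤ ∑ x ∈ Finset.univ.filter (fun x => ¬ P x),
      (1 - χ (2 * x - 1)) * (1 - χ (2 * x + 1)) := by
    have hval : (1 - χ (2 * (2⁻¹ : ZMod p) - 1)) * (1 - χ (2 * (2⁻¹ : ZMod p) + 1)) = 2 := by
      have hz : (2 : ZMod p) * 2⁻¹ - 1 = 0 := by rw [mul_inv_cancel₀ h20]; ring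
      have ho : (2 : ZMod p) * 2⁻¹ + 1 = 2 := by rw [mul_inv_cancel₀ h20]; ring
      rw [hz, ho, quadraticChar_zero, h2]; ring
    calc (2:ℤ) = (1 - χ (2 * (2⁻¹ : ZMod p) - 1)) * (1 - χ (2 * (2⁻¹ : ZMod p) + 1)) :=
          hval.symm
      _ ≤ ∑ x ∈ Finset.univ.filter (fun x => ¬ P x),
            (1 - χ (2 * x - 1)) * (1 - χ (2 * x + 1)) :=
          Finset.single_le_sum (f := fun x => (1 - χ (2 * x - 1)) * (1 - χ (2 * x + 1)))
            (fun x _ => mul_nonneg (hnonneg _) (hnonneg _)) hmem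
  have := hsplit
  rw [hA, hS] at this
  show 4 * (((Finset.univ.filter P).card : ℤ)) ≤ (p : ℤ) - 3
  omega

private lemma key2 (w : ZMod p → ZMod p → ℝ)
    (hmin : ∀ a b : ZMod p, a ≠ b → ∀ Q : (paley p).Walk a b, Q.IsPath →
      listWeight w (specList p a b) ≤ walkWeight w Q)
    (h1sq : IsSquare (-1 : ZMod p)) (h20 : (2 : ZMod p) ≠ 0)
    (d a : ZMod p) (hdns : ¬ IsSquare d) (hd0 : d ≠ 0) (hd3 : d ≠ 3)
    (haq : IsSquare a) (ha0 : a ≠ 0) (had : a ≠ d) (hbq : IsSquare (d - a)) :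
    phiW p w (d * 2⁻¹) + phiW p w (d * 2⁻¹) ≤ phiW p w a + phiW p w (d - a) := by
  have key : ∀ t : ZMod p, w t (t + d * 2⁻¹) + w (t + d * 2⁻¹) (t + d)
      ≤ w t (t + a) + w (t + a) (t + d) := by
    intro t
    have hne : t ≠ t + d := fun h => hd0 (by linear_combination -h)
    have adj1 : (paley p).Adj t (t + a) :=
      paley_adj h1sq _ _ (fun h => ha0 (by linear_combination -h))
        (by have h' : t + a - t = a := by ring
            rw [h']; exact haq)
    have adj2 : (paley p).Adj (t + a) (t + d) :=
      paley_adj h1sq _ _ (fun h => had (by linear_combination h))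
        (by have h' : t + d - (t + a) = d - a := by ring
            rw [h']; exact hbq)
    let Q : (paley p).Walk t (t + d) :=
      SimpleGraph.Walk.cons adj1 (SimpleGraph.Walk.cons adj2 SimpleGraph.Walk.nil)
    have hQpath : Q.IsPath := by
      rw [SimpleGraph.Walk.isPath_def]
      simp only [Q, SimpleGraph.Walk.support_cons, SimpleGraph.Walk.support_nil,
        List.nodup_cons, List.mem_cons, List.mem_singleton, List.not_mem_nil,
        or_false, List.nodup_nil, and_true, not_false_iff, not_or]
      refine ⟨⟨fun h => ha0 (by linear_combination -h), fun h => hd0 (by linear_combination -h)⟩,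
        fun h => had (by linear_combination h)⟩
    have hw := hmin t (t + d) hne Q hQpath
    have hqr : ¬ IsQR p ((t + d) - t) := by
      have h' : (t + d) - t = d := by ring
      rw [h']; exact fun h => hdns h.2
    have h3' : ¬ ((t + d) - t = 3) := by
      have h' : (t + d) - t = d := by ring
      rw [h']; exact hd3
    rw [specList, if_neg hqr, if_neg h3'] at hw
    have hmid : (t + (t + d)) * (2 : ZMod p)⁻¹ = t + d * 2⁻¹ := by
      field_simp; ring
    rw [hmid, listWeight_three] at hw
    have hwW : walkWeight w Q = w t (t + a) + (w (t + a) (t + d) + 0) := by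
      simp [Q, walkWeight]
    rw [hwW] at hw
    linarith
  have hsum := Finset.sum_le_sum (fun t (_ : t ∈ Finset.univ) => key t)
  rw [Finset.sum_add_distrib, Finset.sum_add_distrib] at hsum
  have s2 : ∑ t : ZMod p, w (t + d * 2⁻¹) (t + d) = phiW p w (d * 2⁻¹) := by
    rw [sum_shift]
    congr 1
    field_simp; ring
  have s4 : ∑ t : ZMod p, w (t + a) (t + d) = phiW p w (d - a) := sum_shift w a d
  rw [s2, s4] at hsum
  exact hsum

private lemma keyC1 (w : ZMod p → ZMod p → ℝ)
    (hmin : ∀ a b : ZMod p, a ≠ b → ∀ Q : (paley p).Walk a b, Q.IsPath →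
      listWeight w (specList p a b) ≤ walkWeight w Q)
    (h1sq : IsSquare (-1 : ZMod p)) (h3ns : ¬ IsQR p 3)
    (h10 : (1 : ZMod p) ≠ 0) (h30 : (3 : ZMod p) ≠ 0) (h40 : (4 : ZMod p) ≠ 0) :
    phiW p w 1 + phiW p w 1 + phiW p w 1 ≤ phiW p w 4 + phiW p w (-1) := by
  have key : ∀ t : ZMod p, w t (t + 1) + w (t + 1) (t + 2) + w (t + 2) (t + 3)
      ≤ w t (t + 4) + w (t + 4) (t + 3) := by
    intro t
    have hne : t ≠ t + 3 := fun h => h30 (by linear_combination -h)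
    have adj1 : (paley p).Adj t (t + 4) :=
      paley_adj h1sq _ _ (fun h => h40 (by linear_combination -h))
        (by have h' : t + 4 - t = 4 := by ring
            rw [h']; exact ⟨2, by norm_num⟩)
    have adj2 : (paley p).Adj (t + 4) (t + 3) :=
      paley_adj h1sq _ _ (fun h => h10 (by linear_combination h))
        (by have h' : t + 3 - (t + 4) = -1 := by ring
            rw [h']; exact h1sq)
    let Q : (paley p).Walk t (t + 3) :=
      SimpleGraph.Walk.cons adj1 (SimpleGraph.Walk.cons adj2 SimpleGraph.Walk.nil)
    have hQpath : Q.IsPath := by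
      rw [SimpleGraph.Walk.isPath_def]
      simp only [Q, SimpleGraph.Walk.support_cons, SimpleGraph.Walk.support_nil,
        List.nodup_cons, List.mem_cons, List.mem_singleton, List.not_mem_nil,
        or_false, List.nodup_nil, and_true, not_false_iff, not_or]
      refine ⟨⟨fun h => h40 (by linear_combination -h), fun h => h30 (by linear_combination -h)⟩,
        fun h => h10 (by linear_combination h)⟩
    have hw := hmin t (t + 3) hne Q hQpath
    have h3eq : (t + 3) - t = 3 := by ring
    have hqr : ¬ IsQR p ((t + 3) - t) := by rw [h3eq]; exact h3ns
    rw [specList, if_neg hqr, if_pos h3eq, listWeight_four] at hw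
    have hwW : walkWeight w Q = w t (t + 4) + (w (t + 4) (t + 3) + 0) := by
      simp [Q, walkWeight]
    rw [hwW] at hw
    linarith
  have hsum := Finset.sum_le_sum (fun t (_ : t ∈ Finset.univ) => key t)
  rw [Finset.sum_add_distrib, Finset.sum_add_distrib, Finset.sum_add_distrib] at hsum
  have s2 : ∑ t : ZMod p, w (t + 1) (t + 2) = phiW p w 1 := by
    rw [sum_shift]; norm_num
  have s3 : ∑ t : ZMod p, w (t + 2) (t + 3) = phiW p w 1 := by
    rw [sum_shift]; norm_num
  have s5 : ∑ t : ZMod p, w (t + 4) (t + 3) = phiW p w (-1) := by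
    rw [sum_shift]; congr 1; ring
  rw [s2, s3, s5] at hsum
  exact hsum

private lemma keyC2 (w : ZMod p → ZMod p → ℝ)
    (hmin : ∀ a b : ZMod p, a ≠ b → ∀ Q : (paley p).Walk a b, Q.IsPath →
      listWeight w (specList p a b) ≤ walkWeight w Q)
    (h1sq : IsSquare (-1 : ZMod p)) (hm3ns : ¬ IsQR p (-3)) (hm33 : (-3 : ZMod p) ≠ 3)
    (h10 : (1 : ZMod p) ≠ 0) (h20 : (2 : ZMod p) ≠ 0) (h30 : (3 : ZMod p) ≠ 0) :
    phiW p w ((-3) * 2⁻¹) + phiW p w ((-3) * 2⁻¹)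
      ≤ phiW p w (-1) + phiW p w (-1) + phiW p w (-1) := by
  have key : ∀ t : ZMod p, w t (t + (-3) * 2⁻¹) + w (t + (-3) * 2⁻¹) (t + -3)
      ≤ w t (t + -1) + w (t + -1) (t + -2) + w (t + -2) (t + -3) := by
    intro t
    have hne : t ≠ t + -3 := fun h => h30 (by linear_combination h)
    have adj1 : (paley p).Adj t (t + -1) :=
      paley_adj h1sq _ _ (fun h => h10 (by linear_combination h))
        (by have h' : t + -1 - t = -1 := by ring
            rw [h']; exact h1sq)
    have adj2 : (paley p).Adj (t + -1) (t + -2) :=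
      paley_adj h1sq _ _ (fun h => h10 (by linear_combination h))
        (by have h' : t + -2 - (t + -1) = -1 := by ring
            rw [h']; exact h1sq)
    have adj3 : (paley p).Adj (t + -2) (t + -3) :=
      paley_adj h1sq _ _ (fun h => h10 (by linear_combination h))
        (by have h' : t + -3 - (t + -2) = -1 := by ring
            rw [h']; exact h1sq)
    let Q : (paley p).Walk t (t + -3) :=
      SimpleGraph.Walk.cons adj1 (SimpleGraph.Walk.cons adj2
        (SimpleGraph.Walk.cons adj3 SimpleGraph.Walk.nil))
    have hQpath : Q.IsPath := by
      rw [SimpleGraph.Walk.isPath_def]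
      simp only [Q, SimpleGraph.Walk.support_cons, SimpleGraph.Walk.support_nil,
        List.nodup_cons, List.mem_cons, List.mem_singleton, List.not_mem_nil,
        or_false, List.nodup_nil, and_true, not_false_iff, not_or]
      have d1 : (1 : ZMod p) ≠ 0 := h10
      have d2 : (2 : ZMod p) ≠ 0 := h20
      have d3 : (3 : ZMod p) ≠ 0 := h30
      refine ⟨⟨fun h => d1 (by linear_combination h), fun h => d2 (by linear_combination h),
        fun h => d3 (by linear_combination h)⟩,
        ⟨fun h => d1 (by linear_combination h), fun h => d2 (by linear_combination h)⟩,
        fun h => d1 (by linear_combination h)⟩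
    have hw := hmin t (t + -3) hne Q hQpath
    have h3eq : (t + -3) - t = -3 := by ring
    have hqr : ¬ IsQR p ((t + -3) - t) := by rw [h3eq]; exact hm3ns
    have h3' : ¬ ((t + -3) - t = 3) := by rw [h3eq]; exact hm33
    rw [specList, if_neg hqr, if_neg h3'] at hw
    have hmid : (t + (t + -3)) * (2 : ZMod p)⁻¹ = t + (-3) * 2⁻¹ := by
      field_simp; ring
    rw [hmid, listWeight_three] at hw
    have hwW : walkWeight w Q = w t (t + -1) + (w (t + -1) (t + -2) + (w (t + -2) (t + -3) + 0)) := by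
      simp [Q, walkWeight]
    rw [hwW] at hw
    linarith
  have hsum := Finset.sum_le_sum (fun t (_ : t ∈ Finset.univ) => key t)
  rw [Finset.sum_add_distrib, Finset.sum_add_distrib, Finset.sum_add_distrib] at hsum
  have s2 : ∑ t : ZMod p, w (t + (-3) * 2⁻¹) (t + -3) = phiW p w ((-3) * 2⁻¹) := by
    rw [sum_shift]
    congr 1
    field_simp; ring
  have s3 : ∑ t : ZMod p, w (t + -1) (t + -2) = phiW p w (-1) := by
    rw [sum_shift]; congr 1; ring
  have s4 : ∑ t : ZMod p, w (t + -2) (t + -3) = phiW p w (-1) := by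
    rw [sum_shift]; congr 1; ring
  rw [s2, s3, s4] at hsum
  exact hsum


theorem stmt_17 (p : ℕ) [Fact p.Prime] (hp5 : 5 < p) (hp : 1711 ≤ p)
    (h1 : IsQR p (-1)) (h2 : ¬ IsQR p 2) (h3 : ¬ IsQR p 3) :
    ¬ ∃ w : ZMod p → ZMod p → ℝ,
      (∀ a b, (paley p).Adj a b → 0 < w a b) ∧
      (∀ a b, w a b = w b a) ∧
      (∀ a b : ZMod p, a ≠ b → ∀ Q : (paley p).Walk a b, Q.IsPath →
        listWeight w (specList p a b) ≤ walkWeight w Q) := by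
  rintro ⟨w, hpos, hsymm, hmin⟩
  have hpp : p.Prime := Fact.out
  have hp2 : p ≠ 2 := by omega
  have hsmall : ∀ n : ℕ, 0 < n → n < p → ((n : ℕ) : ZMod p) ≠ 0 := by
    intro n hn hnp h
    rw [ZMod.natCast_eq_zero_iff] at h
    exact absurd (Nat.le_of_dvd hn h) (by omega)
  have h10 : (1 : ZMod p) ≠ 0 := by exact_mod_cast hsmall 1 (by norm_num) (by omega)
  have h20 : (2 : ZMod p) ≠ 0 := by exact_mod_cast hsmall 2 (by norm_num) (by omega)
  have h30 : (3 : ZMod p) ≠ 0 := by exact_mod_cast hsmall 3 (by norm_num) (by omega)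
  have h40 : (4 : ZMod p) ≠ 0 := by exact_mod_cast hsmall 4 (by norm_num) (by omega)
  have h60 : (6 : ZMod p) ≠ 0 := by exact_mod_cast hsmall 6 (by norm_num) (by omega)
  set χ := quadraticChar (ZMod p) with hχdef
  have h1sq : IsSquare (-1 : ZMod p) := h1.2
  have hm1 : χ (-1) = 1 := (quadraticChar_one_iff_isSquare (neg_ne_zero.2 h10)).2 h1sq
  have hns2 : ¬ IsSquare (2 : ZMod p) := fun hs => h2 ⟨h20, hs⟩
  have hχ2 : χ 2 = -1 := quadraticChar_neg_one_iff_not_isSquare.2 hns2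
  have hns3 : ¬ IsSquare (3 : ZMod p) := fun hs => h3 ⟨h30, hs⟩
  have hχ3 : χ 3 = -1 := quadraticChar_neg_one_iff_not_isSquare.2 hns3
  have chi_one_of : ∀ x : ZMod p, x ≠ 0 → IsSquare x → χ x = 1 :=
    fun x hx hs => (quadraticChar_one_iff_isSquare hx).2 hs
  have hχ0 : χ 0 = 0 := quadraticChar_zero
  have sq_of_chi : ∀ x : ZMod p, χ x = 1 → (x ≠ 0 ∧ IsSquare x) := by
    intro x hx
    have hx0 : x ≠ 0 := by intro h; rw [h, hχ0] at hx; omega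
    exact ⟨hx0, (quadraticChar_one_iff_isSquare hx0).1 hx⟩
  set φ : ZMod p → ℝ := phiW p w with hφdef
  have hφpos : ∀ d : ZMod p, d ≠ 0 → IsSquare d → 0 < φ d :=
    fun d h hs => phiW_pos w hpos h1sq d h hs
  have hφneg : ∀ d : ZMod p, φ (-d) = φ d := fun d => phiW_neg w hsymm d
  set D : Finset (ZMod p) := Finset.univ.filter (fun d => d ≠ 0 ∧ IsSquare d) with hD
  have hD1 : (1 : ZMod p) ∈ D := Finset.mem_filter.2 ⟨Finset.mem_univ _, h10, IsSquare.one⟩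
  have hD4 : (4 : ZMod p) ∈ D := Finset.mem_filter.2 ⟨Finset.mem_univ _, h40, ⟨2, by norm_num⟩⟩
  have hDne : (D.image φ).Nonempty := ⟨φ 1, Finset.mem_image_of_mem φ hD1⟩
  set M := (D.image φ).max' hDne with hM
  obtain ⟨x₀, hx₀D, hx₀⟩ := Finset.mem_image.1 ((D.image φ).max'_mem hDne)
  have hle : ∀ x ∈ D, φ x ≤ M := fun x hx => Finset.le_max' _ _ (Finset.mem_image_of_mem φ hx)
  obtain ⟨hx₀0, hx₀sq⟩ := (Finset.mem_filter.1 hx₀D).2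
  have hφ1pos : 0 < φ 1 := hφpos 1 h10 IsSquare.one
  have hC1 : φ 1 + φ 1 + φ 1 ≤ φ 4 + φ (-1) := keyC1 w hmin h1sq h3 h10 h30 h40
  have hφ4 : 2 * φ 1 ≤ φ 4 := by have := hφneg 1; linarith
  have hM2 : 2 * φ 1 ≤ M := le_trans hφ4 (hle 4 hD4)
  have hm3ns : ¬ IsQR p (-3) := by
    rintro ⟨h0, hs⟩
    have h' : (3 : ZMod p) = -1 * -3 := by ring
    exact hns3 (by rw [h']; exact h1sq.mul hs)
  have hm33 : (-3 : ZMod p) ≠ 3 := by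
    intro h
    exact h60 (by linear_combination -h)
  have hC2 : 2 * φ (3 * 2⁻¹) ≤ 3 * φ 1 := by
    have hk := keyC2 w hmin h1sq hm3ns hm33 h10 h20 h30
    rw [← hφdef] at hk
    have h32 : ((-3) * 2⁻¹ : ZMod p) = -(3 * 2⁻¹) := by ring
    rw [h32, hφneg (3 * 2⁻¹)] at hk
    have := hφneg 1
    linarith
  have hx₀3 : x₀ ≠ 3 * 2⁻¹ := by
    intro h
    rw [h] at hx₀
    linarith
  have hχx₀ : χ x₀ = 1 := chi_one_of x₀ hx₀0 hx₀sq
  have hχ2x₀ : χ (2 * x₀) = -1 := by rw [map_mul, hχ2, hχx₀]; ring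
  have h2x₀ns : ¬ IsSquare (2 * x₀) := by
    intro hs
    have := chi_one_of _ (mul_ne_zero h20 hx₀0) hs
    omega
  have h2x₀3 : (2 * x₀ : ZMod p) ≠ 3 := by
    intro h
    exact hx₀3 (by field_simp; linear_combination h)
  have hmidx₀ : (2 * x₀) * 2⁻¹ = x₀ := by
    rw [mul_comm 2 x₀, mul_assoc, mul_inv_cancel₀ h20, mul_one]
  set T := Finset.univ.filter
    (fun a : ZMod p => χ a = 1 ∧ χ (2 * x₀ - a) = 1) with hT
  have hTmax : ∀ a ∈ T, φ a = M ∧ a ≠ 0 ∧ IsSquare a := by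
    intro a ha
    obtain ⟨-, ha1, ha2⟩ := Finset.mem_filter.1 ha
    obtain ⟨ha0, hasq⟩ := sq_of_chi a ha1
    obtain ⟨hb0, hbsq⟩ := sq_of_chi _ ha2
    have had : a ≠ 2 * x₀ := fun h => by rw [h, hχ2x₀] at ha1; omega
    have hk := key2 w hmin h1sq h20 (2 * x₀) a h2x₀ns (mul_ne_zero h20 hx₀0) h2x₀3
      hasq ha0 had hbsq
    rw [hmidx₀, ← hφdef] at hk
    have hφa : φ a ≤ M := hle a (Finset.mem_filter.2 ⟨Finset.mem_univ _, ha0, hasq⟩)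
    have hφb : φ (2 * x₀ - a) ≤ M :=
      hle _ (Finset.mem_filter.2 ⟨Finset.mem_univ _, hb0, hbsq⟩)
    rw [hx₀] at hk
    exact ⟨by linarith, ha0, hasq⟩
  have hφ1M : φ 1 ≤ M := hle 1 hD1
  have hTX : ∀ a ∈ T, χ (2 * a - 1) = -1 ∧ χ (2 * a + 1) = -1 := by
    intro a ha
    obtain ⟨hφa, ha0, hasq⟩ := hTmax a ha
    have hχa : χ a = 1 := (Finset.mem_filter.1 ha).2.1
    have h2a : χ (2 * a) = -1 := by rw [map_mul, hχ2, hχa]; ring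
    have h2ans : ¬ IsSquare (2 * a) := by
      intro hs
      have := chi_one_of _ (mul_ne_zero h20 ha0) hs
      omega
    have h2a3 : (2 * a : ZMod p) ≠ 3 := by
      intro h
      have ha32 : a = 3 * 2⁻¹ := by field_simp; linear_combination h
      rw [ha32] at hφa
      linarith
    have hamid : (2 * a) * 2⁻¹ = a := by
      rw [mul_comm 2 a, mul_assoc, mul_inv_cancel₀ h20, mul_one]
    constructor
    · rcases chi_cases (2 * a - 1) with h | h | h
      · exfalso
        have h0 : 2 * a - 1 = 0 := (chi_zero_iff _).1 h
        have h1' : (2 * a : ZMod p) = 1 := by linear_combination h0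
        rw [h1', map_one] at h2a; omega
      · exfalso
        obtain ⟨hb0, hbsq⟩ := sq_of_chi _ h
        have h1d : (1 : ZMod p) ≠ 2 * a := by
          intro hh
          rw [← hh, map_one] at h2a; omega
        have hk := key2 w hmin h1sq h20 (2 * a) 1 h2ans (mul_ne_zero h20 ha0) h2a3
          IsSquare.one h10 h1d hbsq
        rw [hamid, ← hφdef] at hk
        have hφb : φ (2 * a - 1) ≤ M :=
          hle _ (Finset.mem_filter.2 ⟨Finset.mem_univ _, hb0, hbsq⟩)
        rw [hφa] at hk
        linarith
      · exact h
    · rcases chi_cases (2 * a + 1) with h | h | h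
      · exfalso
        have h0 : 2 * a + 1 = 0 := (chi_zero_iff _).1 h
        have h1' : (2 * a : ZMod p) = -1 := by linear_combination h0
        rw [h1', hm1] at h2a; omega
      · exfalso
        obtain ⟨hb0, hbsq⟩ := sq_of_chi _ h
        have h1d : (-1 : ZMod p) ≠ 2 * a := by
          intro hh
          rw [← hh, hm1] at h2a; omega
        have hk := key2 w hmin h1sq h20 (2 * a) (-1) h2ans (mul_ne_zero h20 ha0) h2a3
          h1sq (neg_ne_zero.2 h10) h1d (by rw [sub_neg_eq_add]; exact hbsq)
        rw [hamid, ← hφdef, sub_neg_eq_add] at hk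
        have hφb : φ (2 * a + 1) ≤ M :=
          hle _ (Finset.mem_filter.2 ⟨Finset.mem_univ _, sq_of_chi _ h⟩)
        have hφm1 : φ (-1) = φ 1 := hφneg 1
        rw [hφa] at hk
        linarith
      · exact h
  have hTsub : T ⊆ Finset.univ.filter
      (fun x : ZMod p => χ (2 * x - 1) = -1 ∧ χ (2 * x + 1) = -1) := by
    intro a ha
    exact Finset.mem_filter.2 ⟨Finset.mem_univ _, hTX a ha⟩
  have hcT := count_T hp2 hm1 (2 * x₀) hχ2x₀
  have hcX := count_X hp2 hm1 hχ2
  have hcard : T.card ≤ (Finset.univ.filter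
      (fun x : ZMod p => χ (2 * x - 1) = -1 ∧ χ (2 * x + 1) = -1)).card :=
    Finset.card_le_card hTsub
  rw [← hχdef] at hcT hcX
  rw [← hT] at hcT
  omega
end

section
/- Let p > 5 be prime with −1 a residue and 2, 3 non-residues mod p. If 𝒫_p were metrizable, then there would exist positive reals (x_a)_{a ∈ R} with x_a = x_{−a} satisfying 2x_a ≤ x_b + x_c for all a,b,c ∈ R with 2a = b + c ≠ 3, and 3x_1 ≤ x_b + x_c for all b,c ∈ R with b + c = 3. -/
open scoped Classical

section Aux
variable {p : ℕ} [Fact p.Prime]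

lemma cast_ne_zero' {n : ℕ} (hn : 0 < n) (hp : n < p) : (n : ZMod p) ≠ 0 := by
  rw [Ne, ZMod.natCast_eq_zero_iff]
  intro h
  exact absurd (Nat.le_of_dvd hn h) (not_le.mpr hp)

lemma isSquare_neg' (h1 : IsSquare (-1 : ZMod p)) {a : ZMod p} (ha : IsSquare a) :
    IsSquare (-a) := by
  have := h1.mul ha; rwa [neg_one_mul] at this

lemma not_isSquare_mul' {s a : ZMod p} (hs : ¬ IsSquare s) (ha : IsSquare a) (ha0 : a ≠ 0) :
    ¬ IsSquare (s * a) := by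
  rintro ⟨t, ht⟩
  obtain ⟨u, hu⟩ := ha
  have hu0 : u ≠ 0 := by rintro rfl; exact ha0 (by simp [hu])
  exact hs ⟨t / u, by rw [div_mul_div_comm, ← ht, hu, mul_div_assoc, div_self (by exact mul_ne_zero hu0 hu0), mul_one]⟩

lemma paley_adj_s19 (h1 : IsQR p (-1)) {d : ZMod p} (hd : IsQR p d) (t : ZMod p) :
    (paley p).Adj t (t + d) := by
  refine ⟨fun h => hd.1 (left_eq_add.mp h), ?_, ?_⟩
  · rw [show t - (t + d) = -d by ring]; exact isSquare_neg' h1.2 hd.2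
  · rw [show t + d - t = d by ring]; exact hd.2

end Aux

theorem stmt_19 (p : ℕ) [Fact p.Prime] (hp : 5 < p)
    (h1 : IsQR p (-1)) (h2 : ¬ IsQR p 2) (h3 : ¬ IsQR p 3)
    -- suppose `𝒫_p` is metrizable:
    (hmet : ∃ w : ZMod p → ZMod p → ℝ,
      (∀ a b, (paley p).Adj a b → 0 < w a b) ∧
      (∀ a b, w a b = w b a) ∧
      (∀ a b : ZMod p, a ≠ b → ∀ Q : (paley p).Walk a b, Q.IsPath →
        ((specList p a b).zip (specList p a b).tail |>.map fun q => w q.1 q.2).sum ≤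
          walkWeight w Q)) :
    ∃ x : ZMod p → ℝ,
      (∀ a : ZMod p, IsQR p a → 0 < x a) ∧
      (∀ a : ZMod p, IsQR p a → x a = x (-a)) ∧
      (∀ a b c : ZMod p, IsQR p a → IsQR p b → IsQR p c →
        2 * a = b + c → b + c ≠ 3 → 2 * x a ≤ x b + x c) ∧
      (∀ b c : ZMod p, IsQR p b → IsQR p c → b + c = 3 →
        3 * x 1 ≤ x b + x c) := by
  obtain ⟨w, hpos, hsymm, hopt⟩ := hmet
  haveI : NeZero p := ⟨(Fact.out : p.Prime).ne_zero⟩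
  have h2z : (2 : ZMod p) ≠ 0 := by
    have := cast_ne_zero' (p := p) (n := 2) (by norm_num) (by omega); simpa using this
  have h3z : (3 : ZMod p) ≠ 0 := by
    have := cast_ne_zero' (p := p) (n := 3) (by norm_num) (by omega); simpa using this
  have h2ns : ¬ IsSquare (2 : ZMod p) := fun hs => h2 ⟨h2z, hs⟩
  have h3ns : ¬ IsSquare (3 : ZMod p) := fun hs => h3 ⟨h3z, hs⟩
  set x : ZMod p → ℝ := fun a => ∑ t : ZMod p, w t (t + a) with hx
  have shift : ∀ c a : ZMod p, ∑ t : ZMod p, w (t + c) (t + c + a) = x a := fun c a =>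
    Fintype.sum_equiv (Equiv.addRight c) _ _ (fun t => rfl)
  refine ⟨x, ?_, ?_, ?_, ?_⟩
  · intro a ha
    exact Finset.sum_pos (fun t _ => hpos _ _ (paley_adj_s19 h1 ha t)) ⟨0, Finset.mem_univ 0⟩
  · intro a _
    calc x a = ∑ t : ZMod p, w (t + a) (t + a + (-a)) := by
          apply Finset.sum_congr rfl; intro t _
          rw [show t + a + (-a) = t by ring]; exact hsymm t (t + a)
      _ = x (-a) := shift a (-a)
  · -- main inequality
    intro a b c ha hb hc habc hne3
    have h2a : ¬ IsQR p (2 * a) := by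
      rintro ⟨_, hs⟩; exact not_isSquare_mul' h2ns ha.2 ha.1 hs
    have h2a0 : (2 * a : ZMod p) ≠ 0 := mul_ne_zero h2z ha.1
    have key : ∀ t : ZMod p,
        w t (t + a) + w (t + a) (t + 2 * a) ≤ w t (t + b) + w (t + b) (t + 2 * a) := by
      intro t
      have huv : t ≠ t + 2 * a := fun h => h2a0 (left_eq_add.mp h)
      have adj1 : (paley p).Adj t (t + b) := paley_adj_s19 h1 hb t
      have adj2 : (paley p).Adj (t + b) (t + 2 * a) := by
        have := paley_adj_s19 h1 hc (t + b)
        rwa [show t + b + c = t + 2 * a by rw [habc]; ring] at this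
      set Q : (paley p).Walk t (t + 2 * a) :=
        SimpleGraph.Walk.cons adj1 (SimpleGraph.Walk.cons adj2 SimpleGraph.Walk.nil) with hQ
      have hQpath : Q.IsPath := by
        rw [hQ]
        simp only [SimpleGraph.Walk.isPath_def, SimpleGraph.Walk.support_cons,
          SimpleGraph.Walk.support_nil, List.nodup_cons, List.mem_cons, List.mem_singleton,
          List.not_mem_nil, or_false, List.nodup_nil, and_true, not_or]
        have hne : t + b ≠ t + 2 * a := by
          intro h
          apply hc.1
          have : t + b + c = t + b := by rw [show t + b + c = t + 2*a by rw [habc]; ring, ← h]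
          exact left_eq_add.mp this.symm
        exact ⟨⟨adj1.1, huv⟩, hne, not_false⟩
      have hspec : specList p t (t + 2 * a) = [t, t + a, t + 2 * a] := by
        rw [specList, if_neg, if_neg]
        · congr 1
          rw [show t + (t + 2 * a) = (t + a) * 2 by ring, mul_inv_cancel_right₀ h2z]
        · rw [show t + 2 * a - t = 2 * a by ring]
          intro h; exact hne3 (by rw [← habc, h])
        · rw [show t + 2 * a - t = 2 * a by ring]; exact h2a
      have := hopt t (t + 2 * a) huv Q hQpath
      rw [hspec] at this
      simp only [List.zip, List.tail, List.map, List.sum_cons, List.sum_nil, hQ, walkWeight,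
        SimpleGraph.Walk.darts_cons, SimpleGraph.Walk.darts_nil] at this
      simpa using this
    have hsum := Finset.sum_le_sum (fun t (_ : t ∈ Finset.univ) => key t)
    rw [Finset.sum_add_distrib, Finset.sum_add_distrib] at hsum
    have e1 : ∑ t : ZMod p, w (t + a) (t + 2 * a) = x a := by
      rw [← shift a a]; apply Finset.sum_congr rfl; intro t _; rw [show t + a + a = t + 2*a by ring]
    have e2 : ∑ t : ZMod p, w (t + b) (t + 2 * a) = x c := by
      rw [← shift b c]; apply Finset.sum_congr rfl; intro t _
      rw [show t + b + c = t + 2*a by rw [habc]; ring]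
    have e0 : ∑ t : ZMod p, w t (t + a) = x a := rfl
    have e0' : ∑ t : ZMod p, w t (t + b) = x b := rfl
    rw [e0, e0', e1, e2] at hsum
    linarith
  · -- the 3-inequality
    intro b c hb hc hbc
    have key : ∀ t : ZMod p,
        w t (t + 1) + w (t + 1) (t + 2) + w (t + 2) (t + 3) ≤ w t (t + b) + w (t + b) (t + 3) := by
      intro t
      have huv : t ≠ t + 3 := fun h => h3z (left_eq_add.mp h)
      have adj1 : (paley p).Adj t (t + b) := paley_adj_s19 h1 hb t
      have adj2 : (paley p).Adj (t + b) (t + 3) := by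
        have := paley_adj_s19 h1 hc (t + b)
        rwa [show t + b + c = t + 3 by rw [← hbc]; ring] at this
      set Q : (paley p).Walk t (t + 3) :=
        SimpleGraph.Walk.cons adj1 (SimpleGraph.Walk.cons adj2 SimpleGraph.Walk.nil) with hQ
      have hQpath : Q.IsPath := by
        rw [hQ]
        simp only [SimpleGraph.Walk.isPath_def, SimpleGraph.Walk.support_cons,
          SimpleGraph.Walk.support_nil, List.nodup_cons, List.mem_cons, List.mem_singleton,
          List.not_mem_nil, or_false, List.nodup_nil, and_true, not_or]
        have hne : t + b ≠ t + 3 := by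
          intro h
          apply hc.1
          have : t + b + c = t + b := by rw [show t + b + c = t + 3 by rw [← hbc]; ring, ← h]
          exact left_eq_add.mp this.symm
        exact ⟨⟨adj1.1, huv⟩, hne, not_false⟩
      have hspec : specList p t (t + 3) = [t, t + 1, t + 2, t + 3] := by
        rw [specList, if_neg, if_pos (by ring)]
        rw [show t + 3 - t = 3 by ring]
        exact fun h => h3 h
      have := hopt t (t + 3) huv Q hQpath
      rw [hspec] at this
      simp only [List.zip, List.zipWith, List.tail, List.map, List.sum_cons, List.sum_nil, hQ, walkWeight,
        SimpleGraph.Walk.darts_cons, SimpleGraph.Walk.darts_nil] at this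
      linarith [this]
    have hsum := Finset.sum_le_sum (fun t (_ : t ∈ Finset.univ) => key t)
    rw [Finset.sum_add_distrib, Finset.sum_add_distrib, Finset.sum_add_distrib] at hsum
    have e1 : ∑ t : ZMod p, w (t + 1) (t + 2) = x 1 := by
      rw [← shift 1 1]; apply Finset.sum_congr rfl; intro t _; rw [show t + 1 + 1 = t + 2 by ring]
    have e2 : ∑ t : ZMod p, w (t + 2) (t + 3) = x 1 := by
      rw [← shift 2 1]; apply Finset.sum_congr rfl; intro t _; rw [show t + 2 + 1 = t + 3 by ring]
    have e3 : ∑ t : ZMod p, w (t + b) (t + 3) = x c := by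
      rw [← shift b c]; apply Finset.sum_congr rfl; intro t _
      rw [show t + b + c = t + 3 by rw [← hbc]; ring]
    have e0 : ∑ t : ZMod p, w t (t + 1) = x 1 := rfl
    have e0' : ∑ t : ZMod p, w t (t + b) = x b := rfl
    rw [e0, e0', e1, e2, e3] at hsum
    linarith
end
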